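/- For every word q, the following are equivalent: (1) whenever q = u·R·v·R·w for a letter R and words u, v, w, q is a prefix of u·R·v·R·v·R·w; (2) there exist a natural number k and words v, w such that v·w has no repeated letters and q is a prefix of w·v^k. -/

import Mathlib

/-- k-fold concatenation of a word with itself. -/
def wpow {α : Type*} (w : List α) : ℕ → List α
  | 0 => []
  | k + 1 => w ++ wpow w k


theorem wpow_add {α : Type*} (v : List α) (m n : ℕ) :
    wpow v (m + n) = wpow v m ++ wpow v n := by
  induction m with
  | zero => simp [wpow]
  | succ m ih =>
    have : m + 1 + n = (m + n) + 1 := by omega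
    rw [this]
    simp [wpow, ih]

theorem length_wpow {α : Type*} (v : List α) (k : ℕ) :
    (wpow v k).length = k * v.length := by
  induction k with
  | zero => simp [wpow]
  | succ k ih => simp [wpow, ih]; ring

theorem wpow_prefix {α : Type*} (v : List α) {m n : ℕ} (h : m ≤ n) :
    wpow v m <+: wpow v n := by
  have : n = m + (n - m) := by omega
  rw [this, wpow_add]
  exact List.prefix_append _ _

theorem mem_wpow {α : Type*} {v : List α} {k : ℕ} {x : α} (h : x ∈ wpow v k) : x ∈ v := by
  induction k with
  | zero => simp [wpow] at h
  | succ k ih =>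
    simp [wpow] at h
    rcases h with h | h
    · exact h
    · exact ih h

theorem prefix_of_prefix_length_le' {α : Type*} {l₁ l₂ l₃ : List α}
    (h₁ : l₁ <+: l₃) (h₂ : l₂ <+: l₃) (h : l₁.length ≤ l₂.length) : l₁ <+: l₂ := by
  have e1 : l₁ = l₃.take l₁.length := by
    obtain ⟨t, ht⟩ := h₁; rw [← ht, List.take_left]
  have e2 : l₂ = l₃.take l₂.length := by
    obtain ⟨t, ht⟩ := h₂; rw [← ht, List.take_left]
  rw [e1, e2]
  exact List.take_prefix_take_left h

theorem drop_wpow {α : Type*} (v : List α) {m k : ℕ} (h : m ≤ k) :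
    (wpow v k).drop (m * v.length) = wpow v (k - m) := by
  have e : k = m + (k - m) := by omega
  have e2 : m * v.length = (wpow v m).length := (length_wpow v m).symm
  conv_lhs => rw [e, wpow_add, e2, List.drop_left]

theorem wpow_getElem {α : Type*} (v : List α) {k t : ℕ} (ht : t < k * v.length)
    (hp : 0 < v.length) :
    (wpow v k)[t]'(by rw [length_wpow]; exact ht) = v[t % v.length]'(Nat.mod_lt _ hp) := by
  induction k generalizing t with
  | zero => omega
  | succ k ih =>
    show (v ++ wpow v k)[t]'(by simp only [List.length_append, length_wpow]; have h2 : (k + 1) * v.length = k * v.length + v.length := (by ring); omega) = _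
    by_cases h : t < v.length
    · rw [List.getElem_append_left h]
      simp [Nat.mod_eq_of_lt h]
    · push_neg at h
      have ht' : t - v.length < k * v.length := by
        have h2 : (k + 1) * v.length = k * v.length + v.length := by ring
        omega
      rw [List.getElem_append_right h, ih ht']
      congr 1
      have e : t = (t - v.length) + v.length := by omega
      conv_rhs => rw [e, Nat.add_mod_right]

theorem prefix_wpow_iter {α : Type*} {s c : List α} (h : s <+: c ++ s) (k : ℕ) :
    s <+: wpow c k ++ s := by
  induction k with
  | zero => simp [wpow]
  | succ k ih =>
    calc s <+: c ++ s := h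
    _ <+: c ++ (wpow c k ++ s) := by
        rw [List.prefix_append_right_inj]; exact ih
    _ = wpow c (k + 1) ++ s := by simp [wpow]

theorem prefix_of_append {α : Type*} {s x y : List α} (h : s <+: x ++ y)
    (hl : s.length ≤ x.length) : s <+: x := by
  exact prefix_of_prefix_length_le' h (List.prefix_append x y) (by simpa)

theorem wpow_shift {α : Type*} (a b : List α) (m : ℕ) :
    a ++ wpow (b ++ a) m = wpow (a ++ b) m ++ a := by
  induction m with
  | zero => simp [wpow]
  | succ m ih =>
    show a ++ ((b ++ a) ++ wpow (b ++ a) m) = ((a ++ b) ++ wpow (a ++ b) m) ++ a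
    simp only [List.append_assoc]
    rw [ih]

theorem getElem_mid {α : Type*} (u t : List α) (R : α) :
    (u ++ [R] ++ t)[u.length]'(by simp) = R := by
  have e : u ++ [R] ++ t = u ++ R :: t := by simp
  rw [List.getElem_of_eq e, List.getElem_append_right (le_refl u.length)]
  simp

theorem drop_mid {α : Type*} (u t : List α) (R : α) :
    (u ++ [R] ++ t).drop (u.length + 1) = t := by
  have : u.length + 1 = (u ++ [R]).length := by simp
  rw [this, List.drop_left]


theorem key_periodic {α : Type*} {v₀ w₀ : List α} (hnd : (v₀ ++ w₀).Nodup) (k : ℕ)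
    {x : List α} (hx : x <+: w₀ ++ wpow v₀ k) {a b : ℕ} (hab : a < b) (hb : b < x.length)
    (he : x[a]'(by omega) = x[b]'hb) :
    x.drop b <+: x.drop a := by
  have ha : a < x.length := by omega
  have hxlen : x.length ≤ (w₀ ++ wpow v₀ k).length := hx.length_le
  have hNlen : (w₀ ++ wpow v₀ k).length = w₀.length + k * v₀.length := by
    rw [List.length_append, length_wpow]
  have haN : a < (w₀ ++ wpow v₀ k).length := by omega
  have hbN : b < (w₀ ++ wpow v₀ k).length := by omega
  have hNab : (w₀ ++ wpow v₀ k)[a]'haN = (w₀ ++ wpow v₀ k)[b]'hbN := by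
    rw [← hx.getElem ha, ← hx.getElem hb, he]
  have hwa : w₀.length ≤ a := by
    by_contra hlt
    push_neg at hlt
    by_cases hbw : b < w₀.length
    · have h1 : (w₀ ++ wpow v₀ k)[a]'haN = w₀[a]'hlt :=
        List.getElem_append_left hlt
      have h2 : (w₀ ++ wpow v₀ k)[b]'hbN = w₀[b]'hbw :=
        List.getElem_append_left hbw
      have : a = b := (hnd.of_append_right.getElem_inj_iff).mp (by rw [← h1, ← h2, hNab])
      omega
    · push_neg at hbw
      have h1 : (w₀ ++ wpow v₀ k)[a]'haN = w₀[a]'hlt :=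
        List.getElem_append_left hlt
      have h2 : (w₀ ++ wpow v₀ k)[b]'hbN
          = (wpow v₀ k)[b - w₀.length]'(by rw [length_wpow]; omega) :=
        List.getElem_append_right hbw
      have hmem1 : (w₀ ++ wpow v₀ k)[a]'haN ∈ w₀ := by
        rw [h1]; exact List.getElem_mem _
      have hmem2 : (w₀ ++ wpow v₀ k)[b]'hbN ∈ v₀ := by
        rw [h2]; exact mem_wpow (List.getElem_mem _)
      exact (List.disjoint_of_nodup_append hnd) hmem2 (by rw [← hNab]; exact hmem1)
  have hp : 0 < v₀.length := by
    rcases Nat.eq_zero_or_pos v₀.length with h0 | h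
    · exfalso; rw [h0] at hNlen; omega
    · exact h
  have ha' : a - w₀.length < k * v₀.length := by omega
  have hb' : b - w₀.length < k * v₀.length := by omega
  have hNa' : (w₀ ++ wpow v₀ k)[a]'haN
      = (wpow v₀ k)[a - w₀.length]'(by rw [length_wpow]; exact ha') :=
    List.getElem_append_right hwa
  have hNb' : (w₀ ++ wpow v₀ k)[b]'hbN
      = (wpow v₀ k)[b - w₀.length]'(by rw [length_wpow]; exact hb') :=
    List.getElem_append_right (by omega)
  have hmods : (a - w₀.length) % v₀.length = (b - w₀.length) % v₀.length := by
    refine (List.Nodup.getElem_inj_iff hnd.of_append_left (hi := Nat.mod_lt _ hp) (hj := Nat.mod_lt _ hp)).mp ?_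
    rw [← wpow_getElem v₀ ha' hp, ← wpow_getElem v₀ hb' hp, ← hNa', ← hNb', hNab]
  obtain ⟨m, hm⟩ : v₀.length ∣ (b - w₀.length) - (a - w₀.length) :=
    (Nat.modEq_iff_dvd' (by omega)).mp hmods
  have hmK : m ≤ k := by
    have h1 : v₀.length * m < k * v₀.length := by omega
    rw [Nat.mul_comm] at h1
    exact le_of_lt (Nat.lt_of_mul_lt_mul_right h1)
  have hdropb : (w₀ ++ wpow v₀ k).drop b
      = (wpow v₀ (k - m)).drop (a - w₀.length) := by
    conv_lhs => rw [show b = w₀.length + (b - w₀.length) by omega]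
    rw [List.drop_length_add_append]
    conv_lhs => rw [show b - w₀.length = m * v₀.length + (a - w₀.length) by
      rw [Nat.mul_comm]; omega]
    rw [← List.drop_drop, drop_wpow v₀ hmK]
  have hdropa : (w₀ ++ wpow v₀ k).drop a
      = (wpow v₀ k).drop (a - w₀.length) := by
    conv_lhs => rw [show a = w₀.length + (a - w₀.length) by omega]
    rw [List.drop_length_add_append]
  have hfin : (w₀ ++ wpow v₀ k).drop b <+: (w₀ ++ wpow v₀ k).drop a := by
    rw [hdropb, hdropa]
    exact (wpow_prefix v₀ (Nat.sub_le k m)).drop _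
  exact prefix_of_prefix_length_le' ((hx.drop b).trans hfin) (hx.drop a)
    (by simp only [List.length_drop]; omega)

/-- Condition C1: whenever `q = u·R·v·R·w`, `q` is a prefix of `u·R·v·R·v·R·w`. -/
def CondC1 {α : Type*} (q : List α) : Prop :=
  ∀ (u v w : List α) (R : α), q = u ++ [R] ++ v ++ [R] ++ w →
    q <+: u ++ [R] ++ v ++ [R] ++ v ++ [R] ++ w

/-- Condition B1: for some `k` there are words `v, w` with `v·w` self-join-free
(no repeated letters) and `q` a prefix of `w·v^k`. -/
def CondB1 {α : Type*} (q : List α) : Prop :=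
  ∃ (k : ℕ) (v w : List α), (v ++ w).Nodup ∧ q <+: w ++ wpow v k

theorem stmt_3 {α : Type*} (q : List α) : CondC1 q ↔ CondB1 q := by
  constructor
  · -- C1 → B1
    intro hC
    classical
    by_cases hnd : q.Nodup
    · exact ⟨0, [], q, by simpa using hnd, by simp [wpow]⟩
    · have hex : ∃ n, ¬ (q.take n).Nodup := ⟨q.length, by simpa⟩
      have hfind_pos : Nat.find hex ≠ 0 := by
        intro h0
        have := Nat.find_spec hex
        rw [h0] at this
        simp at this
      obtain ⟨j, hjdef0⟩ := Nat.exists_eq_succ_of_ne_zero hfind_pos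
      have hjdef : Nat.find hex = j + 1 := hjdef0
      have hnot : ¬ (q.take (j + 1)).Nodup := by rw [← hjdef]; exact Nat.find_spec hex
      have hmin : (q.take j).Nodup := by
        by_contra h
        exact Nat.find_min hex (by omega) h
      have hjq : j < q.length := by
        by_contra h
        push_neg at h
        have e : q.take (j + 1) = q.take j := by
          rw [List.take_of_length_le (by omega), List.take_of_length_le h]
        rw [e] at hnot
        exact hnot hmin
      have hstep : q.take (j + 1) = q.take j ++ [q[j]'hjq] := by
        rw [List.take_succ, List.getElem?_eq_getElem hjq]
        try rfl
      have hRmem : q[j]'hjq ∈ q.take j := by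
        by_contra hR
        apply hnot
        rw [hstep]
        exact hmin.append (List.nodup_singleton _)
          (by simpa [List.disjoint_singleton] using hR)
      obtain ⟨u, v, huv⟩ := List.append_of_mem hRmem
      have huv' : q.take j = u ++ [q[j]'hjq] ++ v := by rw [huv]; simp
      have hq : q = u ++ [q[j]'hjq] ++ v ++ [q[j]'hjq] ++ q.drop (j + 1) := by
        conv_lhs => rw [← List.take_append_drop (j + 1) q]
        rw [hstep, huv']
        try simp
      have hpre := hC u v (q.drop (j + 1)) (q[j]'hjq) hq
      set R := q[j]'hjq with hR
      set w0 := q.drop (j + 1) with hw0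
      rw [hq] at hpre
      simp only [List.append_assoc] at hpre
      rw [List.prefix_append_right_inj, List.prefix_append_right_inj,
        List.prefix_append_right_inj, List.prefix_append_right_inj] at hpre
      -- hpre : w0 <+: v ++ ([R] ++ w0)
      have hw0pre : w0 <+: (v ++ [R]) ++ w0 := by
        rw [List.append_assoc]; exact hpre
      have hs : w0 <+: wpow (v ++ [R]) w0.length := by
        refine prefix_of_append (prefix_wpow_iter hw0pre w0.length) ?_
        rw [length_wpow, List.length_append, List.length_singleton]
        exact Nat.le_mul_of_pos_right _ (by omega)
      have h1 : q <+: (u ++ [R] ++ v ++ [R]) ++ wpow (v ++ [R]) w0.length := by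
        conv_lhs => rw [hq]
        exact (List.prefix_append_right_inj _).mpr hs
      have h2 : (u ++ [R] ++ v ++ [R]) ++ wpow (v ++ [R]) w0.length
          = (u ++ wpow ([R] ++ v) (w0.length + 1)) ++ [R] := by
        show _ = (u ++ (([R] ++ v) ++ wpow ([R] ++ v) w0.length)) ++ [R]
        simp only [List.append_assoc]
        rw [wpow_shift]
      have hlast : wpow ([R] ++ v) (w0.length + 1) ++ [R]
          <+: wpow ([R] ++ v) (w0.length + 2) := by
        conv_rhs => rw [show w0.length + 2 = w0.length + 1 + 1 by omega, wpow_add]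
        refine (List.prefix_append_right_inj _).mpr ?_
        show [R] <+: ([R] ++ v) ++ wpow ([R] ++ v) 0
        exact (List.prefix_append [R] v).trans (List.prefix_append _ _)
      have h3 : (u ++ wpow ([R] ++ v) (w0.length + 1)) ++ [R]
          <+: u ++ wpow ([R] ++ v) (w0.length + 2) := by
        rw [List.append_assoc]
        exact (List.prefix_append_right_inj u).mpr hlast
      refine ⟨w0.length + 2, [R] ++ v, u, ?_, h1.trans (h2 ▸ h3)⟩
      have hmnd : (u ++ ([R] ++ v)).Nodup := by
        have : (q.take j).Nodup := hmin
        rw [huv'] at this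
        simpa [List.append_assoc] using this
      exact (List.perm_append_comm.nodup_iff).mpr hmnd
  · -- B1 → C1
    rintro ⟨k, v₀, w₀, hnd, hx⟩
    intro u v w R hq
    have hlb : (u ++ [R] ++ v).length + 1 ≤ q.length := by
      rw [hq]; simp
    have hab : u.length < (u ++ [R] ++ v).length := by simp
    have hb_lt : (u ++ [R] ++ v).length < q.length := by omega
    have ha_lt : u.length < q.length := by omega
    have e1 : q = u ++ [R] ++ (v ++ [R] ++ w) := by rw [hq]; simp
    have hga : q[u.length]'ha_lt = R := by
      rw [List.getElem_of_eq e1]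
      exact getElem_mid u (v ++ [R] ++ w) R
    have hgb : q[(u ++ [R] ++ v).length]'hb_lt = R := by
      rw [List.getElem_of_eq hq]
      exact getElem_mid (u ++ [R] ++ v) w R
    have hkey := key_periodic hnd k hx hab hb_lt (hga.trans hgb.symm)
    have hda : q.drop u.length = [R] ++ (v ++ [R] ++ w) := by
      rw [e1, List.append_assoc, List.drop_left]
    have hdb : q.drop (u ++ [R] ++ v).length = [R] ++ w := by
      have e2 : q = (u ++ [R] ++ v) ++ ([R] ++ w) := by rw [hq]; simp
      rw [e2]
      conv_lhs => rw [show (u ++ [R] ++ v).length = ((u ++ [R] ++ v)).length from rfl]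
      rw [List.drop_left]
    rw [hda, hdb, List.prefix_append_right_inj] at hkey
    -- hkey : w <+: v ++ [R] ++ w
    have e3 : u ++ [R] ++ v ++ [R] ++ v ++ [R] ++ w
        = (u ++ [R] ++ v ++ [R]) ++ (v ++ [R] ++ w) := by simp
    rw [e3, hq]
    exact (List.prefix_append_right_inj _).mpr hkey
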